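/- Let x_1, …, x_n : Ω → ℝ^M be independent random vectors on a probability space Ω such that every coordinate is bounded: |x_j(ω)[m]| ≤ B for all ω, j and m, where B > 0. Let W : ℝ^M → ℝ^{M'} be a linear map whose operator norm with respect to the Euclidean norms equals ρ > 0. Define h = W((1/n) Σ_{j=1}^n x_j). Then for every t > 0, P( ‖h − E[h]‖₂ ≥ t ) ≤ 2 · M · exp( − n · t² / (2 · ρ² · B² · M) ). -/

import Mathlib

open MeasureTheory Finset

open Real ProbabilityTheory in
lemma hoeffding_core (r : ℝ) (hr : |r| ≤ 1) (u : ℝ) :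
    (1 + r) / 2 * exp u + (1 - r) / 2 * exp (-u) ≤ exp (r * u + u ^ 2 / 2) := by
  obtain ⟨hr1, hr2⟩ := abs_le.mp hr
  set a := (1 + r) / 2 with ha_def
  set b := (1 - r) / 2 with hb_def
  have ha : 0 ≤ a := by simp [ha_def]; linarith
  have hb : 0 ≤ b := by simp [hb_def]; linarith
  have hab : a + b = 1 := by simp [ha_def, hb_def]; ring
  set f : ℝ → ℝ := fun v => a * exp v + b * exp (-v) with hf_def
  have fpos : ∀ v, 0 < f v := by
    intro v
    rcases ha.lt_or_eq with h | h
    · have h1 := mul_pos h (exp_pos v)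
      have h2 := mul_nonneg hb (exp_pos (-v)).le
      simp only [hf_def]; linarith
    · have hb1 : b = 1 := by linarith
      simp only [hf_def, ← h, hb1]
      simpa using exp_pos (-v)
  have hexpneg : ∀ v : ℝ, HasDerivAt (fun v : ℝ => exp (-v)) (-exp (-v)) v := by
    intro v
    exact ((Real.hasDerivAt_exp (-v)).comp v (hasDerivAt_neg v)).congr_deriv (by ring)
  have hf : ∀ v, HasDerivAt f (a * exp v - b * exp (-v)) v := by
    intro v
    exact (((Real.hasDerivAt_exp v).const_mul a).add ((hexpneg v).const_mul b)).congr_deriv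
      (by ring)
  have hf' : ∀ v, HasDerivAt (fun v => a * exp v - b * exp (-v)) (f v) v := by
    intro v
    exact (((Real.hasDerivAt_exp v).const_mul a).sub ((hexpneg v).const_mul b)).congr_deriv
      (by simp only [hf_def]; ring)
  set q : ℝ → ℝ := fun v => r + v - (a * exp v - b * exp (-v)) / f v with hq_def
  have hq : ∀ v, HasDerivAt q (((a * exp v - b * exp (-v)) / f v) ^ 2) v := by
    intro v
    have hdiv := (hf' v).div (hf v) (fpos v).ne'
    have h1 : HasDerivAt (fun v : ℝ => r + v) 1 v := by
      simpa using (hasDerivAt_id v).const_add r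
    have h := h1.sub hdiv
    refine h.congr_deriv ?_
    have := (fpos v).ne'
    field_simp
    ring
  have hqmono : Monotone q := by
    refine monotone_of_deriv_nonneg (fun v => (hq v).differentiableAt) (fun v => ?_)
    rw [(hq v).deriv]
    positivity
  have hq0 : q 0 = 0 := by
    have hf0 : f 0 = 1 := by simp [hf_def, hab]
    simp [hq_def, hf0, ha_def, hb_def]
    ring
  set h : ℝ → ℝ := fun v => r * v + v ^ 2 / 2 - log (f v) with hh_def
  have hh : ∀ v, HasDerivAt h (q v) v := by
    intro v
    have h1 : HasDerivAt (fun v : ℝ => r * v + v ^ 2 / 2) (r + v) v := by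
      have := ((hasDerivAt_id v).const_mul r).add (((hasDerivAt_pow 2 v)).div_const 2)
      exact this.congr_deriv (by norm_num)
    have h2 := (hf v).log (fpos v).ne'
    exact h1.sub h2
  have hh0 : h 0 = 0 := by
    have hf0 : f 0 = 1 := by simp [hf_def, hab]
    simp [hh_def, hf0]
  have key : ∀ v, 0 ≤ h v := by
    intro v
    rcases le_total 0 v with hv | hv
    · have hmono : MonotoneOn h (Set.Ici (0:ℝ)) := by
        refine monotoneOn_of_deriv_nonneg (convex_Ici 0)
          (Continuous.continuousOn (by
            exact continuous_iff_continuousAt.mpr fun v => (hh v).continuousAt))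
          (fun v _ => (hh v).differentiableAt.differentiableWithinAt) ?_
        intro v hv
        rw [(hh v).deriv]
        have : q 0 ≤ q v := hqmono (le_of_lt (by simpa using hv))
        linarith [hq0 ▸ this]
      have := hmono (Set.self_mem_Ici) (Set.mem_Ici.mpr hv) hv
      linarith [hh0 ▸ this]
    · have hanti : AntitoneOn h (Set.Iic (0:ℝ)) := by
        refine antitoneOn_of_deriv_nonpos (convex_Iic 0)
          (Continuous.continuousOn (by
            exact continuous_iff_continuousAt.mpr fun v => (hh v).continuousAt))
          (fun v _ => (hh v).differentiableAt.differentiableWithinAt) ?_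
        intro v hv
        rw [(hh v).deriv]
        have : q v ≤ q 0 := hqmono (le_of_lt (by simpa using hv))
        linarith [hq0 ▸ this]
      have := hanti (Set.mem_Iic.mpr hv) (Set.self_mem_Iic) hv
      linarith [hh0 ▸ this]
  have hfin : log (f u) ≤ r * u + u ^ 2 / 2 := by have := key u; simp [hh_def] at this; linarith
  calc f u = exp (log (f u)) := (exp_log (fpos u)).symm
    _ ≤ exp (r * u + u ^ 2 / 2) := exp_le_exp.mpr hfin

open Real ProbabilityTheory in
lemma mgf_centered_le {Ω : Type*} [MeasurableSpace Ω] (μ : Measure Ω) [IsProbabilityMeasure μ]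
    (X : Ω → ℝ) (hX : Measurable X) (B : ℝ) (hB : 0 < B) (hbdd : ∀ ω, |X ω| ≤ B) (s : ℝ) :
    mgf (fun ω => X ω - ∫ ω', X ω' ∂μ) μ s ≤ exp (s ^ 2 * B ^ 2 / 2) := by
  set c := ∫ ω', X ω' ∂μ with hc_def
  have hcB : |c| ≤ B := by
    have := norm_integral_le_of_norm_le_const (μ := μ) (f := X) (C := B)
      (Filter.Eventually.of_forall fun ω => by simpa using hbdd ω)
    simpa using this
  have hint : Integrable (fun ω => exp (s * X ω)) μ := by
    refine (integrable_const (exp (|s| * B))).mono' ((hX.const_mul s).exp.aestronglyMeasurable) ?_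
    refine Filter.Eventually.of_forall fun ω => ?_
    rw [Real.norm_eq_abs, abs_exp]
    refine exp_le_exp.mpr ?_
    calc s * X ω ≤ |s * X ω| := le_abs_self _
      _ = |s| * |X ω| := abs_mul _ _
      _ ≤ |s| * B := by gcongr; exact hbdd ω
  have haff : Integrable (fun ω => (B - X ω) / (2 * B) * exp (-(s * B))
      + (B + X ω) / (2 * B) * exp (s * B)) μ := by
    have hXi : Integrable X μ := by
      refine (integrable_const B).mono' hX.aestronglyMeasurable
        (Filter.Eventually.of_forall fun ω => by simpa using hbdd ω)
    apply Integrable.add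
    · exact (((integrable_const B).sub hXi).div_const _).mul_const _
    · exact (((integrable_const B).add hXi).div_const _).mul_const _
  have hchord : ∀ ω, exp (s * X ω) ≤ (B - X ω) / (2 * B) * exp (-(s * B))
      + (B + X ω) / (2 * B) * exp (s * B) := by
    intro ω
    obtain ⟨h1, h2⟩ := abs_le.mp (hbdd ω)
    have hl : (0:ℝ) ≤ (B - X ω) / (2 * B) := by
      apply div_nonneg (by linarith) (by linarith)
    have hk : (0:ℝ) ≤ (B + X ω) / (2 * B) := by
      apply div_nonneg (by linarith) (by linarith)
    have hlk : (B - X ω) / (2 * B) + (B + X ω) / (2 * B) = 1 := by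
      field_simp
      ring
    have := convexOn_exp.2 (Set.mem_univ (-(s * B))) (Set.mem_univ (s * B)) hl hk hlk
    simp only [smul_eq_mul] at this
    refine le_trans (le_of_eq ?_) this
    congr 1
    rw [div_mul_eq_mul_div, div_mul_eq_mul_div, ← add_div, eq_div_iff (by positivity)]
    ring
  have hmgf : mgf (fun ω => X ω - c) μ s
      = (∫ ω, exp (s * X ω) ∂μ) * exp (-(s * c)) := by
    rw [mgf]
    simp_rw [mul_sub, sub_eq_add_neg (s * X _), exp_add]
    rw [integral_mul_const]
  rw [hmgf]
  have hIle : ∫ ω, exp (s * X ω) ∂μ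
      ≤ (B - c) / (2 * B) * exp (-(s * B)) + (B + c) / (2 * B) * exp (s * B) := by
    calc ∫ ω, exp (s * X ω) ∂μ
        ≤ ∫ ω, ((B - X ω) / (2 * B) * exp (-(s * B)) + (B + X ω) / (2 * B) * exp (s * B)) ∂μ :=
          integral_mono hint haff hchord
      _ = (B - c) / (2 * B) * exp (-(s * B)) + (B + c) / (2 * B) * exp (s * B) := by
          have hXi : Integrable X μ := by
            refine (integrable_const B).mono' hX.aestronglyMeasurable
              (Filter.Eventually.of_forall fun ω => by simpa using hbdd ω)
          have h1 : Integrable (fun ω => (B - X ω) / (2 * B) * rexp (-(s * B))) μ :=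
            (((integrable_const B).sub hXi).div_const _).mul_const _
          have h2 : Integrable (fun ω => (B + X ω) / (2 * B) * rexp (s * B)) μ :=
            (((integrable_const B).add hXi).div_const _).mul_const _
          have isub : ∫ ω, (B - X ω) ∂μ = B - c := by
            simpa [hc_def] using integral_sub (integrable_const B) hXi
          have iadd : ∫ ω, (B + X ω) ∂μ = B + c := by
            simpa [hc_def] using integral_add (integrable_const B) hXi
          rw [integral_add h1 h2, integral_mul_const, integral_mul_const,
            integral_div, integral_div, isub, iadd]
  set r := c / B with hr_def
  have hr : |r| ≤ 1 := by
    rw [hr_def, abs_div, abs_of_pos hB, div_le_one hB]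
    exact hcB
  have hkey := hoeffding_core r hr (s * B)
  have e1 : (1 + r) / 2 = (B + c) / (2 * B) := by rw [hr_def, one_add_div hB.ne', div_div, mul_comm B 2]
  have e2 : (1 - r) / 2 = (B - c) / (2 * B) := by
    rw [hr_def, one_sub_div hB.ne', div_div, mul_comm B 2]
  have hItot : ∫ ω, exp (s * X ω) ∂μ ≤ exp (r * (s * B) + (s * B) ^ 2 / 2) := by
    calc ∫ ω, exp (s * X ω) ∂μ ≤ (B - c) / (2 * B) * exp (-(s * B)) + (B + c) / (2 * B) * exp (s * B) := hIle
      _ = (1 + r) / 2 * exp (s * B) + (1 - r) / 2 * exp (-(s * B)) := by rw [e1, e2]; ring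
      _ ≤ exp (r * (s * B) + (s * B) ^ 2 / 2) := hkey
  calc (∫ ω, exp (s * X ω) ∂μ) * exp (-(s * c))
      ≤ exp (r * (s * B) + (s * B) ^ 2 / 2) * exp (-(s * c)) := by
        exact mul_le_mul_of_nonneg_right hItot (exp_pos _).le
    _ = exp (s ^ 2 * B ^ 2 / 2) := by
        rw [← exp_add]
        congr 1
        have : r * (s * B) = s * c := by rw [hr_def, div_mul_eq_mul_div, div_eq_iff hB.ne']; ring
        rw [this]; ring

open Real ProbabilityTheory in
lemma tail_bound {Ω : Type*} [MeasurableSpace Ω] (μ : Measure Ω) [IsProbabilityMeasure μ]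
    {n : ℕ} (hn : 0 < n) (Z : Fin n → Ω → ℝ) (hmeas : ∀ j, Measurable (Z j))
    (hindep : iIndepFun Z μ)
    (B : ℝ) (hB : 0 < B) (hbdd : ∀ j ω, |Z j ω| ≤ B) (a : ℝ) (ha : 0 < a) :
    μ {ω | a ≤ |∑ j, (Z j ω - ∫ ω', Z j ω' ∂μ)|}
      ≤ ENNReal.ofReal (2 * Real.exp (-a ^ 2 / (2 * n * B ^ 2))) := by
  set Y : Fin n → Ω → ℝ := fun j ω => Z j ω - ∫ ω', Z j ω' ∂μ with hY_def
  have hYmeas : ∀ j, Measurable (Y j) := fun j => (hmeas j).sub_const _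
  have hYindep : iIndepFun Y μ :=
    hindep.comp (fun j y => y - ∫ ω', Z j ω' ∂μ) (fun j => measurable_id.sub_const _)
  have hcB : ∀ j, |∫ ω', Z j ω' ∂μ| ≤ B := by
    intro j
    have := norm_integral_le_of_norm_le_const (μ := μ) (f := Z j) (C := B)
      (Filter.Eventually.of_forall fun ω => by simpa using hbdd j ω)
    simpa using this
  have hYbdd : ∀ j ω, |Y j ω| ≤ 2 * B := by
    intro j ω
    calc |Y j ω| ≤ |Z j ω| + |∫ ω', Z j ω' ∂μ| := abs_sub _ _
      _ ≤ 2 * B := by linarith [hbdd j ω, hcB j]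
  set S : Ω → ℝ := fun ω => ∑ j, Y j ω with hS_def
  have hSfun : S = ∑ j, Y j := by ext ω; simp [hS_def, Finset.sum_apply]
  have hSmeas : Measurable S := by
    apply Finset.measurable_sum
    exact fun j _ => hYmeas j
  have hSint : ∀ s : ℝ, Integrable (fun ω => exp (s * S ω)) μ := by
    intro s
    refine (integrable_const (exp (|s| * (n * (2 * B))))).mono'
      ((hSmeas.const_mul s).exp.aestronglyMeasurable)
      (Filter.Eventually.of_forall fun ω => ?_)
    rw [Real.norm_eq_abs, abs_exp]
    refine exp_le_exp.mpr ?_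
    calc s * S ω ≤ |s * S ω| := le_abs_self _
      _ = |s| * |S ω| := abs_mul _ _
      _ ≤ |s| * (n * (2 * B)) := by
          gcongr
          calc |S ω| ≤ ∑ j, |Y j ω| := Finset.abs_sum_le_sum_abs _ _
            _ ≤ ∑ _j : Fin n, 2 * B := Finset.sum_le_sum fun j _ => hYbdd j ω
            _ = n * (2 * B) := by simp [mul_comm]
  have hmgf : ∀ s : ℝ, mgf S μ s ≤ exp (n * (s ^ 2 * B ^ 2 / 2)) := by
    intro s
    rw [hSfun, hYindep.mgf_sum hYmeas]
    calc ∏ j : Fin n, mgf (Y j) μ s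
        ≤ ∏ _j : Fin n, exp (s ^ 2 * B ^ 2 / 2) := by
          refine Finset.prod_le_prod (fun j _ => mgf_nonneg) (fun j _ => ?_)
          exact mgf_centered_le μ (Z j) (hmeas j) B hB (hbdd j) s
      _ = exp (n * (s ^ 2 * B ^ 2 / 2)) := by
          rw [Finset.prod_const, ← Real.exp_nat_mul]
          simp
  set s : ℝ := a / (n * B ^ 2) with hs_def
  have hn' : (0:ℝ) < n := Nat.cast_pos.mpr hn
  have hs : 0 < s := by positivity
  have hexp_eq : -s * a + n * (s ^ 2 * B ^ 2 / 2) = -a ^ 2 / (2 * n * B ^ 2) := by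
    rw [hs_def]
    field_simp
    ring
  have hup : (μ {ω | a ≤ S ω}).toReal ≤ exp (-a ^ 2 / (2 * n * B ^ 2)) := by
    calc (μ {ω | a ≤ S ω}).toReal ≤ exp (-s * a) * mgf S μ s :=
          measure_ge_le_exp_mul_mgf a hs.le (hSint s)
      _ ≤ exp (-s * a) * exp (n * (s ^ 2 * B ^ 2 / 2)) := by
          exact mul_le_mul_of_nonneg_left (hmgf s) (exp_pos _).le
      _ = exp (-a ^ 2 / (2 * n * B ^ 2)) := by rw [← exp_add, hexp_eq]
  have hlo : (μ {ω | S ω ≤ -a}).toReal ≤ exp (-a ^ 2 / (2 * n * B ^ 2)) := by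
    calc (μ {ω | S ω ≤ -a}).toReal ≤ exp (-(-s) * (-a)) * mgf S μ (-s) :=
          measure_le_le_exp_mul_mgf (-a) (by linarith) (by simpa using hSint (-s))
      _ ≤ exp (-s * a) * exp (n * (s ^ 2 * B ^ 2 / 2)) := by
          have := hmgf (-s)
          simp only [neg_neg, neg_mul, neg_neg, mul_neg] at *
          rw [show (-s)^2 = s^2 by ring] at this
          exact mul_le_mul_of_nonneg_left this (exp_pos _).le
      _ = exp (-a ^ 2 / (2 * n * B ^ 2)) := by rw [← exp_add, hexp_eq]
  have hsub : {ω | a ≤ |∑ j, (Z j ω - ∫ ω', Z j ω' ∂μ)|}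
      ⊆ {ω | a ≤ S ω} ∪ {ω | S ω ≤ -a} := by
    intro ω hω
    simp only [Set.mem_setOf_eq] at hω
    have h1 : a ≤ |S ω| := hω
    simp only [Set.mem_union, Set.mem_setOf_eq]
    rcases le_abs.mp h1 with h | h
    · exact Or.inl h
    · exact Or.inr (by linarith)
  calc μ {ω | a ≤ |∑ j, (Z j ω - ∫ ω', Z j ω' ∂μ)|}
      ≤ μ ({ω | a ≤ S ω} ∪ {ω | S ω ≤ -a}) := measure_mono hsub
    _ ≤ μ {ω | a ≤ S ω} + μ {ω | S ω ≤ -a} := measure_union_le _ _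
    _ ≤ ENNReal.ofReal (exp (-a ^ 2 / (2 * n * B ^ 2)))
        + ENNReal.ofReal (exp (-a ^ 2 / (2 * n * B ^ 2))) := by
        gcongr
        · rw [← ENNReal.ofReal_toReal (measure_ne_top μ _)]
          exact ENNReal.ofReal_le_ofReal hup
        · rw [← ENNReal.ofReal_toReal (measure_ne_top μ _)]
          exact ENNReal.ofReal_le_ofReal hlo
    _ = ENNReal.ofReal (2 * exp (-a ^ 2 / (2 * n * B ^ 2))) := by
        rw [← ENNReal.ofReal_add (exp_pos _).le (exp_pos _).le]
        congr 1
        ring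

open Real ProbabilityTheory in
/-- **Theorem 2 (RIGBD).** For `n` independent random feature vectors `x_1, …, x_n`
in `ℝ^M` whose coordinates are all bounded in absolute value by `B`, and a linear
map `W` with operator (matrix 2-) norm `ρ`, the embedding `h = W((1/n) ∑ x_j)`
concentrates around its expectation:
`P(‖h − E[h]‖₂ ≥ t) ≤ 2·M·exp(−n·t² / (2·ρ²·B²·M))`. -/
theorem embedding_concentration
    {Ω : Type*} [MeasureSpace Ω] (μ : Measure Ω) [IsProbabilityMeasure μ]
    {n : ℕ} (hn : 0 < n) {M M' : ℕ}
    (x : Fin n → Ω → EuclideanSpace ℝ (Fin M))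
    (hx_meas : ∀ j, Measurable (x j))
    (hx_indep : ProbabilityTheory.iIndepFun x μ)
    (B : ℝ) (hB : 0 < B)
    (hx_bdd : ∀ j, ∀ ω, ∀ m : Fin M, |x j ω m| ≤ B)
    (W : EuclideanSpace ℝ (Fin M) →L[ℝ] EuclideanSpace ℝ (Fin M'))
    (ρ : ℝ) (hρ : 0 < ρ) (hW : ‖W‖ = ρ)
    (t : ℝ) (ht : 0 < t) :
    μ {ω | t ≤ ‖W ((n : ℝ)⁻¹ • ∑ j, x j ω)
              - ∫ ω', W ((n : ℝ)⁻¹ • ∑ j, x j ω') ∂μ‖}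
      ≤ ENNReal.ofReal
          (2 * M * Real.exp (-(n * t ^ 2) / (2 * ρ ^ 2 * B ^ 2 * M))) := by
  classical
  rcases Nat.eq_zero_or_pos M with hM0 | hM
  · subst hM0
    have e : ∀ v : EuclideanSpace ℝ (Fin 0), v = 0 := fun v => by ext i; exact i.elim0
    have hset : {ω | t ≤ ‖W ((n : ℝ)⁻¹ • ∑ j, x j ω)
        - ∫ ω', W ((n : ℝ)⁻¹ • ∑ j, x j ω') ∂μ‖} = ∅ := by
      ext ω
      simp only [Set.mem_setOf_eq, Set.mem_empty_iff_false, iff_false, not_le]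
      rw [e ((n : ℝ)⁻¹ • ∑ j, x j ω), map_zero]
      have : ∀ ω', W ((n : ℝ)⁻¹ • ∑ j, x j ω') = 0 := fun ω' => by
        rw [e ((n : ℝ)⁻¹ • ∑ j, x j ω'), map_zero]
      simp [this, ht]
    rw [hset]
    simp
  -- main case
  have hn' : (0:ℝ) < n := Nat.cast_pos.mpr hn
  have hM' : (0:ℝ) < M := Nat.cast_pos.mpr hM
  have hsM : (0:ℝ) < Real.sqrt M := Real.sqrt_pos.mpr hM'
  set a : ℝ := n * t / (ρ * Real.sqrt M) with ha_def
  have ha : 0 < a := by positivity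
  set c : Fin n → EuclideanSpace ℝ (Fin M) := fun j => ∫ ω', x j ω' ∂μ with hc_def
  have hnormv : ∀ (v : EuclideanSpace ℝ (Fin M)), (∀ m, |v m| ≤ B) → ‖v‖ ≤ B * Real.sqrt M := by
    intro v hv
    rw [EuclideanSpace.norm_eq]
    have hsum : ∑ i, ‖v i‖ ^ 2 ≤ (M : ℝ) * B ^ 2 := by
      calc ∑ i, ‖v i‖ ^ 2 ≤ ∑ _i : Fin M, B ^ 2 :=
            Finset.sum_le_sum fun i _ => by
              rw [Real.norm_eq_abs]
              exact pow_le_pow_left₀ (abs_nonneg _) (hv i) 2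
        _ = (M : ℝ) * B ^ 2 := by simp [mul_comm]
    calc Real.sqrt (∑ i, ‖v i‖ ^ 2) ≤ Real.sqrt ((M : ℝ) * B ^ 2) := Real.sqrt_le_sqrt hsum
      _ = B * Real.sqrt M := by
          rw [Real.sqrt_mul (Nat.cast_nonneg M), Real.sqrt_sq hB.le]; ring
  have hxint : ∀ j, Integrable (x j) μ := by
    intro j
    refine (integrable_const (B * Real.sqrt M)).mono' (hx_meas j).aestronglyMeasurable
      (Filter.Eventually.of_forall fun ω => hnormv _ (hx_bdd j ω))
  have hsint : Integrable (fun ω => (n : ℝ)⁻¹ • ∑ j, x j ω) μ :=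
    (integrable_finset_sum Finset.univ (fun j _ => hxint j)).smul (n : ℝ)⁻¹
  have hEW : ∫ ω', W ((n : ℝ)⁻¹ • ∑ j, x j ω') ∂μ = W ((n : ℝ)⁻¹ • ∑ j, c j) := by
    rw [ContinuousLinearMap.integral_comp_comm W hsint, integral_smul,
      integral_finset_sum _ (fun j _ => hxint j)]
  have hc_coord : ∀ j m, c j m = ∫ ω', x j ω' m ∂μ := by
    intro j m
    have := (EuclideanSpace.proj (𝕜 := ℝ) m).integral_comp_comm (hxint j)
    simpa using this.symm
  set A : Fin M → Set Ω := fun m => {ω | a ≤ |∑ j, (x j ω m - ∫ ω', x j ω' m ∂μ)|} with hA_def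
  have hsub : {ω | t ≤ ‖W ((n : ℝ)⁻¹ • ∑ j, x j ω)
      - ∫ ω', W ((n : ℝ)⁻¹ • ∑ j, x j ω') ∂μ‖} ⊆ ⋃ m, A m := by
    intro ω hω
    simp only [Set.mem_setOf_eq] at hω
    have hdiff : W ((n : ℝ)⁻¹ • ∑ j, x j ω) - ∫ ω', W ((n : ℝ)⁻¹ • ∑ j, x j ω') ∂μ
        = W ((n : ℝ)⁻¹ • ∑ j, (x j ω - c j)) := by
      rw [hEW, ← map_sub, ← smul_sub, ← Finset.sum_sub_distrib]
    have hnormle : (n : ℝ) * t / ρ ≤ ‖∑ j, (x j ω - c j)‖ := by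
      have h1 : t ≤ ρ * ((n : ℝ)⁻¹ * ‖∑ j, (x j ω - c j)‖) := by
        calc t ≤ ‖W ((n : ℝ)⁻¹ • ∑ j, (x j ω - c j))‖ := by rw [← hdiff]; exact hω
          _ ≤ ‖W‖ * ‖(n : ℝ)⁻¹ • ∑ j, (x j ω - c j)‖ := W.le_opNorm _
          _ = ρ * ((n : ℝ)⁻¹ * ‖∑ j, (x j ω - c j)‖) := by
              rw [hW, norm_smul]
              simp [abs_of_pos (inv_pos.mpr hn')]
      rw [div_le_iff₀ hρ]
      have h2 := mul_le_mul_of_nonneg_left h1 hn'.le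
      calc (n:ℝ) * t ≤ (n:ℝ) * (ρ * ((n : ℝ)⁻¹ * ‖∑ j, (x j ω - c j)‖)) := h2
        _ = ‖∑ j, (x j ω - c j)‖ * ρ := by field_simp
    by_contra hnot
    simp only [Set.mem_iUnion, hA_def, Set.mem_setOf_eq, not_exists, not_le] at hnot
    have hcoord_eq : ∀ m : Fin M, (∑ j, (x j ω - c j)) m
        = ∑ j, (x j ω m - ∫ ω', x j ω' m ∂μ) := by
      intro m
      have h1 := map_sum (EuclideanSpace.proj (𝕜 := ℝ) m) (fun j => x j ω - c j) Finset.univ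
      simp only [map_sub] at h1
      simpa [hc_coord] using h1
    have hd : ∀ m : Fin M, |(∑ j, (x j ω - c j)) m| < a := by
      intro m
      rw [hcoord_eq m]
      exact hnot m
    have hlt : ‖∑ j, (x j ω - c j)‖ < Real.sqrt M * a := by
      rw [EuclideanSpace.norm_eq]
      have hne : (Finset.univ : Finset (Fin M)).Nonempty := ⟨⟨0, hM⟩, Finset.mem_univ _⟩
      have hsum : ∑ m, ‖(∑ j, (x j ω - c j)) m‖ ^ 2 < (M : ℝ) * a ^ 2 := by
        calc ∑ m, ‖(∑ j, (x j ω - c j)) m‖ ^ 2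
            < ∑ _m : Fin M, a ^ 2 := by
              refine Finset.sum_lt_sum_of_nonempty hne fun m _ => ?_
              rw [Real.norm_eq_abs]
              exact pow_lt_pow_left₀ (hd m) (abs_nonneg _) (by norm_num)
          _ = (M : ℝ) * a ^ 2 := by simp [mul_comm]
      calc Real.sqrt (∑ m, ‖(∑ j, (x j ω - c j)) m‖ ^ 2)
          < Real.sqrt ((M : ℝ) * a ^ 2) := Real.sqrt_lt_sqrt (by positivity) hsum
        _ = Real.sqrt M * a := by
            rw [Real.sqrt_mul (Nat.cast_nonneg M), Real.sqrt_sq ha.le]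
    have : Real.sqrt M * a = n * t / ρ := by
      rw [ha_def]
      field_simp
    rw [this] at hlt
    linarith
  have hbound : ∀ m : Fin M, μ (A m) ≤ ENNReal.ofReal (2 * Real.exp (-a ^ 2 / (2 * n * B ^ 2))) := by
    intro m
    refine tail_bound μ hn (fun j ω => x j ω m)
      (fun j => ((EuclideanSpace.proj (𝕜 := ℝ) m).continuous.measurable).comp (hx_meas j))
      (hx_indep.comp (fun j (v : EuclideanSpace ℝ (Fin M)) => v m)
        (fun j => (EuclideanSpace.proj (𝕜 := ℝ) m).continuous.measurable))
      B hB (fun j ω => hx_bdd j ω m) a ha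
  have hexp_eq : -a ^ 2 / (2 * n * B ^ 2) = -(n * t ^ 2) / (2 * ρ ^ 2 * B ^ 2 * M) := by
    have ha2 : a ^ 2 = (n:ℝ) ^ 2 * t ^ 2 / (ρ ^ 2 * M) := by
      rw [ha_def, div_pow, mul_pow, mul_pow, Real.sq_sqrt (Nat.cast_nonneg M)]
    rw [ha2]
    field_simp
  calc μ {ω | t ≤ ‖W ((n : ℝ)⁻¹ • ∑ j, x j ω)
        - ∫ ω', W ((n : ℝ)⁻¹ • ∑ j, x j ω') ∂μ‖}
      ≤ μ (⋃ m, A m) := measure_mono hsub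
    _ ≤ ∑ m : Fin M, μ (A m) := measure_iUnion_fintype_le _ _
    _ ≤ ∑ _m : Fin M, ENNReal.ofReal (2 * Real.exp (-a ^ 2 / (2 * n * B ^ 2))) :=
        Finset.sum_le_sum fun m _ => hbound m
    _ = ENNReal.ofReal (2 * M * Real.exp (-(n * t ^ 2) / (2 * ρ ^ 2 * B ^ 2 * M))) := by
        rw [Finset.sum_const, Finset.card_univ, Fintype.card_fin, nsmul_eq_mul,
          ← ENNReal.ofReal_natCast M, ← ENNReal.ofReal_mul (Nat.cast_nonneg M), hexp_eq]
        congr 1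
        ring
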